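/- For every integer k ≥ 2, the 4k×4k block matrix M = [[f(2k,1)+f(2k,−1), f(2k,0)],[f(2k,0), f(2k,1)]] is invertible with inverse M⁻¹ = [[f(2k,−1), −f(2k,−2)],[−f(2k,2), f(2k,1)+f(2k,3)]]. -/
import Mathlib

/-- The matrix `f(n,a)`: row `i` has a single 1, in column `i+a` if `i` is even and in
column `i-a` if `i` is odd (indices mod `n`). -/
def fMat (n : ℕ) (a : ℤ) : Matrix (ZMod n) (ZMod n) ℝ :=
  Matrix.of fun i j =>
    if (Even i.val ∧ j = i + (a : ZMod n)) ∨ (¬ Even i.val ∧ j = i - (a : ZMod n)) then 1 else 0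

lemma even_val_iff (k : ℕ) [NeZero (2*k)] (x : ZMod (2*k)) :
    Even x.val ↔ ZMod.castHom ⟨k, rfl⟩ (ZMod 2) x = 0 := by
  rw [ZMod.castHom_apply, ← ZMod.natCast_val, even_iff_two_dvd,
    ← ZMod.natCast_eq_zero_iff]

lemma even_val_add (k : ℕ) [NeZero (2*k)] (x : ZMod (2*k)) (a : ℤ) :
    Even ((x + (a : ZMod (2*k))).val) ↔ (Even x.val ↔ Even a) := by
  have ha : Even a ↔ ((a : ZMod 2) = 0) := by
    rw [ZMod.intCast_zmod_eq_zero_iff_dvd]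
    norm_num [even_iff_two_dvd]
  rw [even_val_iff, even_val_iff, map_add, map_intCast, ha]
  exact (by decide : ∀ u v : ZMod 2, u + v = 0 ↔ (u = 0 ↔ v = 0)) _ _

lemma fMat_mul (k : ℕ) [NeZero (2*k)] (a b : ℤ) :
    fMat (2*k) a * fMat (2*k) b = fMat (2*k) (if Even a then a + b else a - b) := by
  ext i j
  rw [Matrix.mul_apply]
  by_cases hi : Even i.val
  · have hrow : ∀ l, fMat (2*k) a i l = if l = i + (a : ZMod (2*k)) then 1 else 0 := by
      intro l; simp [fMat, hi, ← Nat.not_even_iff_odd]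
    have hsum : ∑ l, fMat (2*k) a i l * fMat (2*k) b l j
        = fMat (2*k) b (i + (a : ZMod (2*k))) j := by
      simp only [hrow, ite_mul, one_mul, zero_mul]
      rw [Finset.sum_ite_eq' Finset.univ]
      simp
    rw [hsum]
    have ht : Even ((i + (a : ZMod (2*k))).val) ↔ Even a := by
      rw [even_val_add]; simp [hi]
    by_cases hE : Even a
    · have ht' : Even ((i + (a : ZMod (2*k))).val) := ht.mpr hE
      simp only [fMat, Matrix.of_apply, ht', hi, if_pos hE, true_and, not_true_eq_false,
        false_and, or_false]
      have : ((a + b : ℤ) : ZMod (2*k)) = (a : ZMod (2*k)) + b := by push_cast; ring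
      rw [this, add_assoc]
    · have ht' : ¬ Even ((i + (a : ZMod (2*k))).val) := fun h => hE (ht.mp h)
      simp only [fMat, Matrix.of_apply, ht', hi, if_neg hE, true_and, not_false_eq_true,
        false_and, false_or, not_true_eq_false, or_false]
      have : ((a - b : ℤ) : ZMod (2*k)) = (a : ZMod (2*k)) - b := by push_cast; ring
      rw [this, add_sub_assoc]
  · have hteq : i + ((-a : ℤ) : ZMod (2*k)) = i - (a : ZMod (2*k)) := by push_cast; ring
    have hrow : ∀ l, fMat (2*k) a i l = if l = i - (a : ZMod (2*k)) then 1 else 0 := by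
      intro l; simp [fMat, hi, ← Nat.not_even_iff_odd]
    have hsum : ∑ l, fMat (2*k) a i l * fMat (2*k) b l j
        = fMat (2*k) b (i - (a : ZMod (2*k))) j := by
      simp only [hrow, ite_mul, one_mul, zero_mul]
      rw [Finset.sum_ite_eq' Finset.univ]
      simp
    rw [hsum]
    have ht : Even ((i - (a : ZMod (2*k))).val) ↔ ¬ Even a := by
      rw [← hteq, even_val_add]; simp [hi]
    by_cases hE : Even a
    · have ht' : ¬ Even ((i - (a : ZMod (2*k))).val) := by simp [ht, hE]
      simp only [fMat, Matrix.of_apply, ht', hi, if_pos hE, true_and, not_false_eq_true,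
        false_and, false_or, not_true_eq_false, or_false]
      have : ((a + b : ℤ) : ZMod (2*k)) = (a : ZMod (2*k)) + b := by push_cast; ring
      rw [this, sub_sub]
    · have ht' : Even ((i - (a : ZMod (2*k))).val) := ht.mpr hE
      simp only [fMat, Matrix.of_apply, ht', hi, if_neg hE, true_and, not_true_eq_false,
        false_and, or_false, false_or, not_false_eq_true]
      have : ((a - b : ℤ) : ZMod (2*k)) = (a : ZMod (2*k)) - b := by push_cast; ring
      rw [this, sub_sub_eq_add_sub, sub_add_eq_add_sub]

lemma fMat_zero (n : ℕ) : fMat n 0 = 1 := by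
  ext i j
  by_cases h : i = j
  · simp [fMat, Matrix.one_apply, h, em]
  · simp [fMat, Matrix.one_apply, h]
    exact ⟨fun _ h' => h h'.symm, fun _ h' => h h'.symm⟩

/-- For `k ≥ 2`, the block matrix `[[f(2k,1)+f(2k,−1), f(2k,0)],[f(2k,0), f(2k,1)]]` is
invertible with inverse `[[f(2k,−1), −f(2k,−2)],[−f(2k,2), f(2k,1)+f(2k,3)]]`. -/
theorem stmt_17 (k : ℕ) (hk : 2 ≤ k) [NeZero (2 * k)] :
    Matrix.fromBlocks (fMat (2 * k) 1 + fMat (2 * k) (-1)) (fMat (2 * k) 0)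
        (fMat (2 * k) 0) (fMat (2 * k) 1) *
      Matrix.fromBlocks (fMat (2 * k) (-1)) (-(fMat (2 * k) (-2)))
        (-(fMat (2 * k) 2)) (fMat (2 * k) 1 + fMat (2 * k) 3) = 1 ∧
    Matrix.fromBlocks (fMat (2 * k) (-1)) (-(fMat (2 * k) (-2)))
        (-(fMat (2 * k) 2)) (fMat (2 * k) 1 + fMat (2 * k) 3) *
      Matrix.fromBlocks (fMat (2 * k) 1 + fMat (2 * k) (-1)) (fMat (2 * k) 0)
        (fMat (2 * k) 0) (fMat (2 * k) 1) = 1 := by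
  have e1 : fMat (2*k) 1 * fMat (2*k) (-1) = fMat (2*k) 2 := by rw [fMat_mul]; norm_num
  have e2 : fMat (2*k) (-1) * fMat (2*k) (-1) = fMat (2*k) 0 := by rw [fMat_mul]; norm_num
  have e3 : fMat (2*k) 1 * fMat (2*k) (-2) = fMat (2*k) 3 := by rw [fMat_mul]; norm_num
  have e4 : fMat (2*k) (-1) * fMat (2*k) (-2) = fMat (2*k) 1 := by rw [fMat_mul]; norm_num
  have e5 : fMat (2*k) 1 * fMat (2*k) 2 = fMat (2*k) (-1) := by rw [fMat_mul]; norm_num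
  have e6 : fMat (2*k) 1 * fMat (2*k) 3 = fMat (2*k) (-2) := by rw [fMat_mul]; norm_num
  have e7 : fMat (2*k) (-1) * fMat (2*k) 1 = fMat (2*k) (-2) := by rw [fMat_mul]; norm_num
  have e8 : fMat (2*k) (-2) * fMat (2*k) 1 = fMat (2*k) (-1) := by rw [fMat_mul]; norm_num
  have e9 : fMat (2*k) 2 * fMat (2*k) 1 = fMat (2*k) 3 := by rw [fMat_mul]; norm_num
  have e10 : fMat (2*k) 2 * fMat (2*k) (-1) = fMat (2*k) 1 := by rw [fMat_mul]; norm_num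
  have e11 : fMat (2*k) 1 * fMat (2*k) 1 = fMat (2*k) 0 := by rw [fMat_mul]; norm_num
  have e12 : fMat (2*k) 3 * fMat (2*k) 1 = fMat (2*k) 2 := by rw [fMat_mul, if_neg (by decide)]; norm_num
  constructor <;>
  · simp only [Matrix.fromBlocks_multiply, add_mul, mul_add, Matrix.neg_mul, Matrix.mul_neg,
      e1, e2, e3, e4, e5, e6, e7, e8, e9, e10, e11, e12, fMat_zero, Matrix.one_mul,
      Matrix.mul_one]
    rw [← Matrix.fromBlocks_one, Matrix.fromBlocks_inj]
    refine ⟨?_, ?_, ?_, ?_⟩ <;> abel
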